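/- Let F be a subfield of ℂ all of whose elements are real (have imaginary part 0), let α be a complex number of modulus 1, and set a = Re α (viewed as a complex number). Let F(α) and F(a) denote the subfields of ℂ generated by F together with α, respectively F together with a. Then: (i) the set of elements of F(α) with imaginary part 0 is exactly F(a); and (ii) if α ≠ 1 and α ≠ −1, then α ∉ F(a) (so that, since α satisfies α² − 2aα + 1 = 0, the extension F(α)/F(a) has degree exactly 2). -/

import Mathlib

open Complex

/-- The subfield of real elements of ℂ. -/
noncomputable def realSF : Subfield ℂ where
  carrier := {z | z.im = 0}
  mul_mem' := by
    rintro a b (ha : a.im = 0) (hb : b.im = 0)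
    simp [Set.mem_setOf_eq, Complex.mul_im, ha, hb]
  one_mem' := by simp
  add_mem' := by
    rintro a b (ha : a.im = 0) (hb : b.im = 0)
    simp [Set.mem_setOf_eq, Complex.add_im, ha, hb]
  zero_mem' := by simp
  neg_mem' := by
    rintro a (ha : a.im = 0)
    simp [Set.mem_setOf_eq, ha]
  inv_mem' := by
    rintro a (ha : a.im = 0)
    simp [Set.mem_setOf_eq, Complex.inv_im, ha]

@[simp] lemma mem_realSF {z : ℂ} : z ∈ realSF ↔ z.im = 0 := Iff.rfl

/-- `K[α] = {p + qα}` is a subfield when `α` satisfies `α(2a-α)=1` with `a = Re α ∈ K`,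
in particular `α² = 2aα - 1`. -/
noncomputable def quadSF (K : Subfield ℂ) (α : ℂ) (hK : ∀ z ∈ K, z.im = 0)
    (ha : ((α.re : ℂ)) ∈ K) (hprod : α * (2*(α.re:ℂ) - α) = 1) : Subfield ℂ where
  carrier := {z | ∃ p ∈ K, ∃ q ∈ K, z = p + q*α}
  zero_mem' := ⟨0, K.zero_mem, 0, K.zero_mem, by ring⟩
  one_mem' := ⟨1, K.one_mem, 0, K.zero_mem, by ring⟩
  add_mem' := by
    rintro x y ⟨p, hp, q, hq, rfl⟩ ⟨r, hr, s, hs, rfl⟩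
    exact ⟨p + r, add_mem hp hr, q + s, add_mem hq hs, by ring⟩
  neg_mem' := by
    rintro x ⟨p, hp, q, hq, rfl⟩
    exact ⟨-p, neg_mem hp, -q, neg_mem hq, by ring⟩
  mul_mem' := by
    rintro x y ⟨p, hp, q, hq, rfl⟩ ⟨r, hr, s, hs, rfl⟩
    refine ⟨p*r - q*s, sub_mem (mul_mem hp hr) (mul_mem hq hs),
      p*s + q*r + 2*(α.re:ℂ)*q*s,
      add_mem (add_mem (mul_mem hp hs) (mul_mem hq hr))
        (mul_mem (mul_mem (mul_mem (by
          rw [show (2:ℂ) = 1+1 by norm_num]; exact add_mem K.one_mem K.one_mem) ha) hq) hs), ?_⟩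
    linear_combination (-(q*s)) * hprod
  inv_mem' := by
    rintro x ⟨p, hp, q, hq, rfl⟩
    set a : ℂ := (α.re : ℂ) with hadef
    by_cases h0 : p + q*α = 0
    · exact ⟨0, K.zero_mem, 0, K.zero_mem, by simp [h0]⟩
    · have h2K : (2:ℂ) ∈ K := by
        rw [show (2:ℂ) = 1+1 by norm_num]; exact add_mem K.one_mem K.one_mem
      have hpre : p.im = 0 := hK p hp
      have hqre : q.im = 0 := hK q hq
      have hca : (starRingEnd ℂ) α = 2*a - α := by
        have h := Complex.add_conj α
        push_cast at h
        linear_combination h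
      have hw : (starRingEnd ℂ) (p + q*α) = (p + 2*a*q) - q*α := by
        rw [map_add, map_mul, hca, Complex.conj_eq_iff_im.mpr hpre,
          Complex.conj_eq_iff_im.mpr hqre]
        ring
      have hN : (p + q*α) * ((p + 2*a*q) - q*α) = p^2 + 2*a*p*q + q^2 := by
        linear_combination (q^2) * hprod
      have hNne : (p^2 + 2*a*p*q + q^2 : ℂ) ≠ 0 := by
        rw [← hN]
        exact mul_ne_zero h0 (hw ▸ (map_ne_zero (starRingEnd ℂ)).mpr h0)
      have hNK : (p^2 + 2*a*p*q + q^2 : ℂ) ∈ K :=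
        add_mem (add_mem (pow_mem hp 2)
          (mul_mem (mul_mem (mul_mem h2K ha) hp) hq)) (pow_mem hq 2)
      have hone : (p + q*α) * (((p + 2*a*q) - q*α) / (p^2 + 2*a*p*q + q^2)) = 1 := by
        rw [mul_div_assoc', hN, div_self hNne]
      refine ⟨(p + 2*a*q)/(p^2 + 2*a*p*q + q^2),
        div_mem (add_mem hp (mul_mem (mul_mem h2K ha) hq)) hNK,
        -(q/(p^2 + 2*a*p*q + q^2)), neg_mem (div_mem hq hNK), ?_⟩
      rw [inv_eq_of_mul_eq_one_right hone]
      ring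

theorem real_part_of_adjoin_angle (F : Subfield ℂ) (hF : ∀ z ∈ F, z.im = 0)
    (α : ℂ) (hα : ‖α‖ = 1) :
    (∀ z : ℂ, (z ∈ Subfield.closure (↑F ∪ {α}) ∧ z.im = 0) ↔
        z ∈ Subfield.closure (↑F ∪ {(α.re : ℂ)})) ∧
    (α ≠ 1 → α ≠ -1 → α ∉ Subfield.closure (↑F ∪ {(α.re : ℂ)})) := by
  set a : ℂ := (α.re : ℂ) with hadef
  have hαne : α ≠ 0 := by
    intro h; rw [h] at hα; simp at hα
  have hnorm : α * (starRingEnd ℂ) α = 1 := by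
    rw [Complex.mul_conj]
    norm_cast
    rw [← Complex.sq_norm, hα]; norm_num
  have hca : (starRingEnd ℂ) α = 2*a - α := by
    have h := Complex.add_conj α
    push_cast at h
    linear_combination h
  have hprod : α * (2*a - α) = 1 := by rw [← hca]; exact hnorm
  have hmemα : α ∈ Subfield.closure (↑F ∪ {α}) :=
    Subfield.subset_closure (Or.inr rfl)
  have h2mem : (2:ℂ) ∈ Subfield.closure (↑F ∪ {α}) := by
    rw [show (2:ℂ) = 1+1 by norm_num]; exact add_mem (one_mem _) (one_mem _)
  have haK : a ∈ Subfield.closure (↑F ∪ {α}) := by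
    have hinv : α⁻¹ = 2*a - α := inv_eq_of_mul_eq_one_right hprod
    have hval : a = (α + α⁻¹)/2 := by rw [hinv]; ring
    rw [hval]
    exact div_mem (add_mem hmemα (inv_mem hmemα)) h2mem
  set K := Subfield.closure (↑F ∪ {a}) with hKdef
  have hK_le : K ≤ Subfield.closure (↑F ∪ {α}) := by
    rw [hKdef]
    apply Subfield.closure_le.mpr
    apply Set.union_subset
    · exact fun x hx => Subfield.subset_closure (Or.inl hx)
    · rintro x rfl; exact haK
  have hKreal : ∀ z ∈ K, z.im = 0 := by
    intro z hz
    have : K ≤ realSF := by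
      apply Subfield.closure_le.mpr
      apply Set.union_subset
      · exact fun x hx => hF x hx
      · rintro x rfl; simp [mem_realSF, hadef]
    exact this hz
  have haKmem : a ∈ K := Subfield.subset_closure (Or.inr rfl)
  have hFK : ∀ x ∈ F, x ∈ K := fun x hx => Subfield.subset_closure (Or.inl hx)
  set S := quadSF K α hKreal haKmem hprod with hSdef
  have hle : Subfield.closure (↑F ∪ {α}) ≤ S := by
    apply Subfield.closure_le.mpr
    apply Set.union_subset
    · intro x hx
      exact ⟨x, hFK x hx, 0, K.zero_mem, by ring⟩
    · rintro x rfl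
      exact ⟨0, K.zero_mem, 1, K.one_mem, by ring⟩
  constructor
  · intro z
    constructor
    · rintro ⟨hz, him⟩
      obtain ⟨p, hp, q, hq, hzeq⟩ := hle hz
      by_cases hαim : α.im = 0
      · have hαa : α = a := by
          apply Complex.ext <;> simp [hadef, hαim]
        rw [hzeq, hαa]
        exact add_mem hp (mul_mem hq haKmem)
      · have hqim : q.im = 0 := hKreal q hq
        have hpim : p.im = 0 := hKreal p hp
        have him' : (p + q*α).im = q.re * α.im := by
          simp [Complex.add_im, Complex.mul_im, hpim, hqim]
        rw [hzeq] at him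
        rw [him'] at him
        have hqre : q.re = 0 := by
          rcases mul_eq_zero.mp him with h | h
          · exact h
          · exact absurd h hαim
        have hq0 : q = 0 := Complex.ext hqre hqim
        rw [hzeq, hq0]
        simpa using hp
    · intro hz
      exact ⟨hK_le hz, hKreal z hz⟩
  · intro h1 hm1 hmem
    have him : α.im = 0 := hKreal α hmem
    have hre : α.re = 1 ∨ α.re = -1 := by
      have h := Complex.sq_norm α
      rw [hα] at h
      have hsq : α.re^2 = 1 := by
        have hns := Complex.normSq_apply α
        rw [him] at hns
        nlinarith [hns, h]
      have : (α.re - 1) * (α.re + 1) = 0 := by nlinarith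
      rcases mul_eq_zero.mp this with h' | h'
      · left; linarith
      · right; linarith
    rcases hre with h | h
    · exact h1 (Complex.ext (by simp [h]) (by simp [him]))
    · exact hm1 (Complex.ext (by simp [h]) (by simp [him]))
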